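/- Let R be a regular ring of characteristic p, u ∈ R, and for an ideal J ⊆ R containing a fixed ideal I with uI ⊆ I^[p], let J^{★u} denote the smallest ideal L ⊇ J with u·L ⊆ L^[p]. Then J^{★u} exists whenever the I_1(−) operation exists on R, and it is given by the stable value of the ascending chain J_0 = J, J_{n+1} = J_n + I_1(u·J_n). -/

import Mathlib

/-- The `q`-th Frobenius power of an ideal: the ideal generated by `q`-th powers of its
elements. -/
def fpow {R : Type*} [CommRing R] (q : ℕ) (J : Ideal R) : Ideal R :=
  Ideal.span ((fun a => a ^ q) '' (J : Set R))

/-- `ν_e = 1 + p + ... + p^{e-1}`. -/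
def nu (p e : ℕ) : ℕ := ∑ i ∈ Finset.range e, p ^ i

lemma fpow_mono {R : Type*} [CommRing R] (q : ℕ) {A B : Ideal R} (h : A ≤ B) :
    fpow q A ≤ fpow q B :=
  Ideal.span_mono (Set.image_mono h)

theorem stmt_17 {R : Type*} [CommRing R] [IsNoetherianRing R]
    (p : ℕ) (hp : p.Prime) [CharP R p]
    -- the operation `I_1(-)`:
    (I₁ : Ideal R → Ideal R)
    (hI₁ : ∀ A : Ideal R, A ≤ fpow p (I₁ A))
    (hI₁min : ∀ A L : Ideal R, A ≤ fpow p L → I₁ A ≤ L)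
    (u : R) (I J : Ideal R)
    (hI : ∀ x ∈ I, u * x ∈ fpow p I)
    (hIJ : I ≤ J)
    -- the ascending chain `J₀ = J`, `J_{n+1} = J_n + I₁(u J_n)`:
    (c : ℕ → Ideal R) (hc0 : c 0 = J)
    (hcs : ∀ n : ℕ, c (n + 1) = c n ⊔ I₁ (Ideal.span {u} * c n)) :
    ∃ N : ℕ, (∀ n : ℕ, N ≤ n → c n = c N) ∧
      J ≤ c N ∧ (∀ x ∈ c N, u * x ∈ fpow p (c N)) ∧
      ∀ L : Ideal R, J ≤ L → (∀ x ∈ L, u * x ∈ fpow p L) → c N ≤ L := by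
  have hmono : Monotone c := by
    apply monotone_nat_of_le_succ
    intro n
    rw [hcs n]
    exact le_sup_left
  obtain ⟨N, hN⟩ := monotone_stabilizes_iff_noetherian.mpr ‹IsNoetherianRing R›
    ⟨c, hmono⟩
  refine ⟨N, ?_, ?_, ?_, ?_⟩
  · intro n hn
    exact (hN n hn).symm
  · rw [← hc0]; exact hmono (Nat.zero_le N)
  · intro x hx
    have hstab : c (N + 1) = c N := (hN (N + 1) (Nat.le_succ N)).symm
    have h1 : I₁ (Ideal.span {u} * c N) ≤ c N := by
      have h1' : I₁ (Ideal.span {u} * c N) ≤ c (N + 1) := by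
        rw [hcs N]; exact le_sup_right
      rwa [hstab] at h1'
    have h2 : Ideal.span {u} * c N ≤ fpow p (c N) :=
      le_trans (hI₁ (Ideal.span {u} * c N)) (fpow_mono p h1)
    exact h2 (Ideal.mul_mem_mul (Ideal.subset_span rfl) hx)
  · intro L hJL hL
    have key : ∀ n, c n ≤ L := by
      intro n
      induction n with
      | zero => rw [hc0]; exact hJL
      | succ n ih =>
        rw [hcs n]
        refine sup_le ih (hI₁min _ _ ?_)
        refine Ideal.mul_le.mpr ?_
        intro r hr s hs
        have hru : ∃ a, r = a * u := by
          rw [Ideal.mem_span_singleton] at hr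
          obtain ⟨a, ha⟩ := hr
          exact ⟨a, by rw [ha, mul_comm]⟩
        obtain ⟨a, rfl⟩ := hru
        have : u * s ∈ fpow p L := hL s (ih hs)
        rw [mul_assoc]
        exact Ideal.mul_mem_left _ _ this
    exact key N
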